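/- The combinatory-logic TRS consisting of the single rule @(@(@(S,x),y),z) → @(@(x,z),@(y,z)) (the S-combinator rule S x y z → x z (y z)) is terminating on the set T = {Sⁿ : n ≥ 1} of flat S-terms, where S¹ = S and S^{n+1} = @(Sⁿ, S): no term Sⁿ admits an infinite rewrite sequence. -/

import Mathlib

namespace CLS

/-- Ground terms of combinatory logic over a set `C` of constants,
built with a binary application symbol. -/
inductive CL (C : Type) : Type
  | const : C → CL C
  | app : CL C → CL C → CL C

/-- One-step rewriting with the rule `S x y z → x z (y z)` (the only constant
is `S`): a rule instance inside a one-hole context. -/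
inductive SRw : CL Unit → CL Unit → Prop
  | root (x y z : CL Unit) :
      SRw (.app (.app (.app (.const ()) x) y) z) (.app (.app x z) (.app y z))
  | appl {s t : CL Unit} (u : CL Unit) : SRw s t → SRw (.app s u) (.app t u)
  | appr (u : CL Unit) {s t : CL Unit} : SRw s t → SRw (.app u s) (.app u t)

/-- The flat S-terms: `flatS n = S^{n+1}`, i.e. `flatS 0 = S` and
`flatS (n+1) = (flatS n) S`. -/
def flatS : ℕ → CL Unit
  | 0 => .const ()
  | n + 1 => .app (flatS n) (.const ())

/-! ### Auxiliary development -/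

/-- The constant `S`. -/
abbrev Sc : CL Unit := .const ()

/-- `pw t k` is `t S S ... S` with `k` trailing `S`'s. -/
def pw (t : CL Unit) : ℕ → CL Unit
  | 0 => t
  | k + 1 => .app (pw t k) Sc

/-- Encoding of reachable states: a base (`S` or `S S`) wrapped in layers
`w ↦ (S S w) S^k`. -/
def enc : Bool → List ℕ → CL Unit
  | false, [] => Sc
  | true, [] => .app Sc Sc
  | b, k :: l => pw (.app (.app Sc Sc) (enc b l)) k

lemma enc_cons (b : Bool) (k : ℕ) (l : List ℕ) :
    enc b (k :: l) = pw (.app (.app Sc Sc) (enc b l)) k := by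
  cases b <;> rfl

/-- Appending an `S` on the right, on states. -/
def apS : Bool × List ℕ → Bool × List ℕ
  | (false, []) => (true, [])
  | (true, []) => (false, [0])
  | (b, k :: l) => (b, (k + 1) :: l)

lemma enc_apS (b : Bool) (l : List ℕ) :
    CL.app (enc b l) Sc = enc (apS (b, l)).1 (apS (b, l)).2 := by
  match b, l with
  | false, [] => rfl
  | true, [] => rfl
  | false, k :: l => rfl
  | true, k :: l => rfl

/-- Strict lexicographic comparison of counter lists (first differing entry). -/
inductive LexLt : List ℕ → List ℕ → Prop
  | head {k k' : ℕ} {l l' : List ℕ} : k < k' → LexLt (k :: l) (k' :: l')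
  | tail {k : ℕ} {l l' : List ℕ} : LexLt l l' → LexLt (k :: l) (k :: l')

/-- Invariant quantity: total number of `S`'s, essentially. -/
def Q (b : Bool) (l : List ℕ) : ℕ := 2 * l.length + l.sum + (cond b 1 0)

lemma Q_apS (b : Bool) (l : List ℕ) :
    Q (apS (b, l)).1 (apS (b, l)).2 = Q b l + 1 := by
  match b, l with
  | false, [] => rfl
  | true, [] => rfl
  | false, k :: l => simp [apS, Q]; ring
  | true, k :: l => simp [apS, Q]; ring

lemma noStep_S {t : CL Unit} (h : SRw Sc t) : False := by cases h

lemma noStep_SS {t : CL Unit} (h : SRw (.app Sc Sc) t) : False := by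
  cases h with
  | appl u hs => exact noStep_S hs
  | appr u hs => exact noStep_S hs

/-- Inversion of a rewrite step from an application. -/
lemma srw_app_inv {a b t : CL Unit} (h : SRw (.app a b) t) :
    (∃ x y, a = .app (.app Sc x) y ∧ t = .app (.app x b) (.app y b)) ∨
    (∃ a', SRw a a' ∧ t = .app a' b) ∨
    (∃ b', SRw b b' ∧ t = .app a b') := by
  cases h with
  | root x y z => exact Or.inl ⟨x, y, rfl, rfl⟩
  | appl u hs => exact Or.inr (Or.inl ⟨_, hs, rfl⟩)
  | appr u hs => exact Or.inr (Or.inr ⟨_, hs, rfl⟩)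

lemma pw_isApp (x y : CL Unit) (k : ℕ) : ∃ a b, pw (.app x y) k = .app a b := by
  cases k with
  | zero => exact ⟨x, y, rfl⟩
  | succ k => exact ⟨_, _, rfl⟩

lemma not_Sx_eq_pw (x w : CL Unit) (j : ℕ) :
    CL.app Sc x = pw (.app (.app Sc Sc) w) j → False := by
  cases j with
  | zero => intro h; injection h with h1 h2; cases h1
  | succ j =>
    intro h
    injection h with h1 h2
    obtain ⟨a, b, hab⟩ := pw_isApp (.app Sc Sc) w j
    rw [hab] at h1
    cases h1

/-- Key shape analysis: a rewrite step from `(S S w) S^k` either fires the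
innermost spine redex (needs `k ≥ 1`) or happens inside `w`. -/
lemma pow_step (w t : CL Unit) (k : ℕ)
    (h : SRw (pw (.app (.app Sc Sc) w) k) t) :
    (∃ k', k = k' + 1 ∧ t = pw (.app (.app Sc Sc) (.app w Sc)) k') ∨
    (∃ w', SRw w w' ∧ t = pw (.app (.app Sc Sc) w') k) := by
  induction k generalizing t with
  | zero =>
    rcases srw_app_inv h with ⟨x, y, hxy, ht⟩ | ⟨a', ha, ht⟩ | ⟨b', hb, ht⟩
    · injection hxy with h1 h2
      cases h1
    · exact absurd ha noStep_SS
    · exact Or.inr ⟨b', hb, ht⟩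
  | succ k ih =>
    rcases srw_app_inv h with ⟨x, y, hxy, ht⟩ | ⟨a', ha, ht⟩ | ⟨b', hb, ht⟩
    · -- pw X k = app (app S x) y
      cases k with
      | zero =>
        -- X = app (app S S) w = app (app S x) y
        injection hxy with h1 h2
        injection h1 with h3 h4
        subst h2; subst h4
        exact Or.inl ⟨0, rfl, ht⟩
      | succ j =>
        -- pw X (j+1) = app (pw X j) S = app (app S x) y
        injection hxy with h1 h2
        exact absurd h1.symm (not_Sx_eq_pw x w j)
    · rcases ih a' ha with ⟨k', hk, ha'⟩ | ⟨w', hw, ha'⟩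
      · subst hk; subst ha'
        exact Or.inl ⟨k' + 1, rfl, by rw [ht]; rfl⟩
      · subst ha'
        exact Or.inr ⟨w', hw, by rw [ht]; rfl⟩
    · exact absurd hb noStep_S

/-- Closure of the encoded states under rewriting, with lexicographic decrease
and preservation of `Q`. -/
lemma enc_step : ∀ (l : List ℕ) (b : Bool) (t : CL Unit), SRw (enc b l) t →
    ∃ b' l', t = enc b' l' ∧ LexLt l' l ∧ Q b' l' = Q b l := by
  intro l
  induction l with
  | nil =>
    intro b t h
    cases b with
    | false => exact absurd h noStep_S
    | true => exact absurd h noStep_SS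
  | cons k l ih =>
    intro b t h
    rw [enc_cons] at h
    rcases pow_step (enc b l) t k h with ⟨k', hk, ht⟩ | ⟨w', hw, ht⟩
    · subst hk
      refine ⟨(apS (b, l)).1, k' :: (apS (b, l)).2, ?_, LexLt.head (Nat.lt_succ_self k'), ?_⟩
      · rw [ht, enc_cons, ← enc_apS]
      · have h1 := Q_apS b l
        simp only [Q, List.length_cons, List.sum_cons] at *
        omega
    · obtain ⟨b', l', rfl, hlex, hQ⟩ := ih b w' hw
      refine ⟨b', k :: l', by rw [ht, enc_cons], LexLt.tail hlex, ?_⟩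
      simp only [Q, List.length_cons, List.sum_cons] at *
      omega

/-- Positional numeric measure for counter lists. -/
def mu (B : ℕ) : ℕ → List ℕ → ℕ
  | _, [] => 0
  | W, k :: l => k * B ^ W + mu B (W - 1) l

lemma mu_bound (B : ℕ) (hB : 1 ≤ B) :
    ∀ (l : List ℕ) (W : ℕ), (∀ x ∈ l, x < B) → l.length ≤ W + 1 →
      mu B W l < B ^ (W + 1) := by
  intro l
  induction l with
  | nil => intro W _ _; exact pow_pos (by omega) _
  | cons k l ih =>
    intro W hx hlen
    have hk : k < B := hx k (List.mem_cons_self)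
    cases W with
    | zero =>
      have : l = [] := by
        simp only [List.length_cons] at hlen
        exact List.length_eq_zero_iff.mp (by omega)
      subst this
      simpa [mu] using hk
    | succ W =>
      have hrec : mu B W l < B ^ (W + 1) := by
        refine ih W (fun x hx' => hx x (List.mem_cons_of_mem _ hx')) ?_
        simp only [List.length_cons] at hlen; omega
      have : mu B (W + 1) (k :: l) = k * B ^ (W + 1) + mu B W l := rfl
      rw [this]
      calc k * B ^ (W + 1) + mu B W l < k * B ^ (W + 1) + B ^ (W + 1) := by omega
        _ = (k + 1) * B ^ (W + 1) := by ring
        _ ≤ B * B ^ (W + 1) := Nat.mul_le_mul_right _ (by omega)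
        _ = B ^ (W + 2) := by ring

lemma mu_lt (B : ℕ) (hB : 1 ≤ B) :
    ∀ {l' l : List ℕ}, LexLt l' l → ∀ (W : ℕ), (∀ x ∈ l', x < B) →
      l'.length ≤ W + 1 → mu B W l' < mu B W l := by
  intro l' l hlex
  induction hlex with
  | @head k k' r' r hkk =>
    intro W hx hlen
    have hr' : mu B (W - 1) r' < B ^ W := by
      cases W with
      | zero =>
        have : r' = [] := by
          simp only [List.length_cons] at hlen
          exact List.length_eq_zero_iff.mp (by omega)
        subst this
        simp [mu]
      | succ W =>
        have := mu_bound B hB r' W (fun x hx' => hx x (List.mem_cons_of_mem _ hx'))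
          (by simp only [List.length_cons] at hlen; omega)
        simpa using this
    have h1 : mu B W (k :: r') = k * B ^ W + mu B (W - 1) r' := rfl
    have h2 : mu B W (k' :: r) = k' * B ^ W + mu B (W - 1) r := rfl
    rw [h1, h2]
    have : k * B ^ W + mu B (W - 1) r' < (k + 1) * B ^ W := by
      have : (k + 1) * B ^ W = k * B ^ W + B ^ W := by ring
      omega
    have h3 : (k + 1) * B ^ W ≤ k' * B ^ W := Nat.mul_le_mul_right _ (by omega)
    omega
  | @tail k r' r hlex ih =>
    intro W hx hlen
    have hr' : r' ≠ [] := by cases hlex <;> simp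
    cases W with
    | zero =>
      exfalso
      simp only [List.length_cons] at hlen
      exact hr' (List.length_eq_zero_iff.mp (by omega))
    | succ W =>
      have := ih W (fun x hx' => hx x (List.mem_cons_of_mem _ hx'))
        (by simp only [List.length_cons] at hlen; omega)
      have h1 : mu B (W + 1) (k :: r') = k * B ^ (W + 1) + mu B W r' := rfl
      have h2 : mu B (W + 1) (k :: r) = k * B ^ (W + 1) + mu B W r := rfl
      omega

lemma sum_le_Q (b : Bool) (l : List ℕ) : l.sum ≤ Q b l := by
  simp only [Q]; omega

/-- Main descent: no infinite rewrite sequence from an encoded state. -/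
lemma descent (Q0 : ℕ) : ∀ (m : ℕ) (b : Bool) (l : List ℕ), Q b l = Q0 →
    mu (Q0 + 1) Q0 l < m →
    ∀ f : ℕ → CL Unit, f 0 = enc b l → (∀ k, SRw (f k) (f (k + 1))) → False := by
  intro m
  induction m with
  | zero => intro b l _ h; exact absurd h (Nat.not_lt_zero _)
  | succ m ih =>
    intro b l hQ hmu f hf0 hstep
    have h1 : SRw (enc b l) (f 1) := hf0 ▸ hstep 0
    obtain ⟨b', l', hf1, hlex, hQ'⟩ := enc_step l b (f 1) h1
    have hQ0' : Q b' l' = Q0 := hQ'.trans hQ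
    have hsum : l'.sum ≤ Q0 := hQ0' ▸ sum_le_Q b' l'
    have hx : ∀ x ∈ l', x < Q0 + 1 := by
      intro x hxm
      have : x ≤ l'.sum := List.single_le_sum (fun _ _ => Nat.zero_le _) x hxm
      omega
    have hlen : l'.length ≤ Q0 + 1 := by
      have : 2 * l'.length ≤ Q b' l' := by simp only [Q]; omega
      omega
    have hmu' : mu (Q0 + 1) Q0 l' < mu (Q0 + 1) Q0 l :=
      mu_lt (Q0 + 1) (by omega) hlex Q0 hx hlen
    exact ih b' l' hQ0' (by omega) (fun k => f (k + 1)) hf1 (fun k => hstep (k + 1))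

lemma flatS_enc : ∀ n : ℕ, ∃ b l, flatS n = enc b l := by
  intro n
  match n with
  | 0 => exact ⟨false, [], rfl⟩
  | 1 => exact ⟨true, [], rfl⟩
  | (n + 2) =>
    refine ⟨false, [n], ?_⟩
    rw [enc_cons]
    induction n with
    | zero => rfl
    | succ n ihn => show CL.app (flatS (n + 2)) Sc = _; rw [ihn]; rfl

/-- The S-combinator rule is terminating on the set of flat
S-terms `{Sⁿ : n ≥ 1}`. -/
theorem S_rule_terminating_on_flat_S_terms :
    ∀ n : ℕ, ¬ ∃ f : ℕ → CL Unit, f 0 = flatS n ∧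
      ∀ k : ℕ, SRw (f k) (f (k + 1)) := by
  intro n
  rintro ⟨f, hf0, hstep⟩
  obtain ⟨b, l, hbl⟩ := flatS_enc n
  exact descent (Q b l) (mu (Q b l + 1) (Q b l) l + 1) b l rfl
    (Nat.lt_succ_self _) f (hf0.trans hbl) hstep

end CLS
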